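/- Fix an integer K ≥ 1. Let x = (x_1,…,x_K) ∈ [0,1]^K, let k ∈ {1,…,K}, let x'_k ∈ [0,1], and let x' be the vector obtained from x by replacing its k-th coordinate with x'_k. Then the biased sample variances satisfy |σ̂²(x) − σ̂²(x')| ≤ (K−1)/K², and in particular |σ̂²(x) − σ̂²(x')| ≤ 1/K. -/

import Mathlib

open Finset

/-- The biased sample variance of a vector `x ∈ ℝ^K`:
`σ̂²(x) = (1/K) Σ_k (x_k − x̄)²` with `x̄ = (1/K) Σ_k x_k`. -/
noncomputable def biasedSampleVar (K : ℕ) (x : Fin K → ℝ) : ℝ :=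
  (∑ k, (x k - (∑ j, x j) / K) ^ 2) / K

lemma biasedSampleVar_eq_double (K : ℕ) (hK : K ≠ 0) (x : Fin K → ℝ) :
    biasedSampleVar K x = (∑ i, ∑ j, (x i - x j) ^ 2) / (2 * (K : ℝ) ^ 2) := by
  have hK' : (K : ℝ) ≠ 0 := Nat.cast_ne_zero.mpr hK
  unfold biasedSampleVar
  have h1 : ∑ i, ∑ j, (x i - x j) ^ 2
      = 2 * (K : ℝ) * (∑ i, (x i) ^ 2) - 2 * (∑ i, x i) ^ 2 := by
    simp only [sub_sq, Finset.sum_add_distrib, Finset.sum_sub_distrib,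
      Finset.sum_const, Finset.card_univ, Fintype.card_fin, nsmul_eq_mul,
      ← Finset.mul_sum, ← Finset.sum_mul]
    ring
  have h2 : ∑ k, (x k - (∑ j, x j) / (K : ℝ)) ^ 2
      = (∑ i, (x i) ^ 2) - (∑ i, x i) ^ 2 / K := by
    simp only [sub_sq, Finset.sum_add_distrib, Finset.sum_sub_distrib,
      Finset.sum_const, Finset.card_univ, Fintype.card_fin, nsmul_eq_mul,
      ← Finset.sum_mul, ← Finset.mul_sum]
    field_simp
    ring
  rw [h1, h2]
  field_simp

/-- Replacing a single coordinate of a `[0,1]`-valued vector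
changes the biased sample variance by at most `(K−1)/K²`, hence by at most `1/K`. -/
theorem biasedSampleVar_bounded_differences
    (K : ℕ) (hK : 1 ≤ K)
    (x : Fin K → ℝ) (hx : ∀ k, x k ∈ Set.Icc (0 : ℝ) 1)
    (k : Fin K) (xk' : ℝ) (hxk' : xk' ∈ Set.Icc (0 : ℝ) 1) :
    |biasedSampleVar K x - biasedSampleVar K (Function.update x k xk')| ≤
        ((K : ℝ) - 1) / (K : ℝ) ^ 2 ∧
      |biasedSampleVar K x - biasedSampleVar K (Function.update x k xk')| ≤
        1 / (K : ℝ) := by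
  have hK0 : K ≠ 0 := Nat.one_le_iff_ne_zero.mp hK
  have hKR : (1 : ℝ) ≤ (K : ℝ) := by exact_mod_cast hK
  have hKpos : (0 : ℝ) < (K : ℝ) := by linarith
  set x' := Function.update x k xk' with hx'
  set g : Fin K → ℝ := fun j => (x k - x j) ^ 2 - (xk' - x j) ^ 2 with hg
  -- the double-sum difference
  have hupd_ne : ∀ i, i ≠ k → x' i = x i := fun i hi =>
    Function.update_of_ne hi _ _
  have hupd_k : x' k = xk' := Function.update_self _ _ _
  have hdiff : (∑ i, ∑ j, (x i - x j) ^ 2) - (∑ i, ∑ j, (x' i - x' j) ^ 2)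
      = 2 * ∑ j ∈ univ.erase k, g j := by
    rw [← Finset.sum_sub_distrib]
    have hsplit : ∀ s : Fin K → ℝ, ∑ i, s i = s k + ∑ i ∈ univ.erase k, s i := by
      intro s
      rw [Finset.add_sum_erase _ s (Finset.mem_univ k)]
    rw [hsplit]
    have hrow_k : (∑ j, (x k - x j) ^ 2) - (∑ j, (x' k - x' j) ^ 2)
        = ∑ j ∈ univ.erase k, g j := by
      rw [← Finset.sum_sub_distrib, hsplit (fun j => (x k - x j)^2 - (x' k - x' j)^2)]
      have : (x k - x k) ^ 2 - (x' k - x' k) ^ 2 = 0 := by ring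
      rw [this, zero_add]
      apply Finset.sum_congr rfl
      intro j hj
      rw [hupd_k, hupd_ne j (Finset.mem_erase.mp hj).1]
    have hrow_i : ∀ i ∈ univ.erase k,
        (∑ j, (x i - x j) ^ 2) - (∑ j, (x' i - x' j) ^ 2) = g i := by
      intro i hi
      have hik : i ≠ k := (Finset.mem_erase.mp hi).1
      rw [← Finset.sum_sub_distrib]
      have : ∀ j, (x i - x j) ^ 2 - (x' i - x' j) ^ 2
          = if j = k then g i else 0 := by
        intro j
        by_cases hjk : j = k
        · subst hjk
          rw [hupd_ne i hik, hupd_k, if_pos rfl, hg]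
          ring
        · rw [hupd_ne i hik, hupd_ne j hjk, if_neg hjk]
          ring
      simp only [this]
      simp [Finset.sum_ite_eq', Finset.mem_univ]
    rw [hrow_k, Finset.sum_congr rfl hrow_i]
    ring
  -- bound each g j by 1
  have hgb : ∀ j, |g j| ≤ 1 := by
    intro j
    obtain ⟨h0, h1⟩ := hx k
    obtain ⟨h0', h1'⟩ := hx j
    obtain ⟨h0'', h1''⟩ := hxk'
    have ha : (x k - x j) ^ 2 ≤ 1 := by nlinarith
    have hb : (xk' - x j) ^ 2 ≤ 1 := by nlinarith
    have ha0 := sq_nonneg (x k - x j)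
    have hb0 := sq_nonneg (xk' - x j)
    rw [abs_le]
    constructor <;> simp only [hg] <;> nlinarith
  have hsum : |∑ j ∈ univ.erase k, g j| ≤ (K : ℝ) - 1 := by
    calc |∑ j ∈ univ.erase k, g j| ≤ ∑ j ∈ univ.erase k, |g j| :=
          Finset.abs_sum_le_sum_abs _ _
      _ ≤ ∑ j ∈ univ.erase k, (1 : ℝ) := Finset.sum_le_sum fun j _ => hgb j
      _ = (K : ℝ) - 1 := by
          rw [Finset.sum_const, Finset.card_erase_of_mem (Finset.mem_univ k)]
          simp [Finset.card_univ]
          rw [Nat.cast_sub hK]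
          simp
  have hmain : |biasedSampleVar K x - biasedSampleVar K x'|
      ≤ ((K : ℝ) - 1) / (K : ℝ) ^ 2 := by
    rw [biasedSampleVar_eq_double K hK0 x, biasedSampleVar_eq_double K hK0 x',
      div_sub_div_same, hdiff]
    rw [abs_div, abs_of_pos (by positivity : (0:ℝ) < 2 * (K:ℝ)^2),
      div_le_div_iff₀ (by positivity) (by positivity)]
    rw [abs_mul, abs_two]
    nlinarith [hsum, abs_nonneg (∑ j ∈ univ.erase k, g j), sq_nonneg ((K:ℝ))]
  refine ⟨hmain, hmain.trans ?_⟩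
  rw [div_le_div_iff₀ (by positivity) hKpos]
  nlinarith
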